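/- arXiv:0905.1861 — 2 statements merged into one kernel-verified Lean document; each statement's English description precedes it below -/
import Mathlib

section
/- Let Ω ⊆ ℍ be an axially symmetric s-domain, let f, g : Ω → ℍ be slice regular, and let f∗g denote their regular product. Then for q ∈ Ω, (f∗g)(q) = 0 if and only if f(q) = 0, or f(q) ≠ 0 and g(f(q)⁻¹·q·f(q)) = 0. -/
open Quaternion

noncomputable section

/-- The 2-sphere of imaginary units in the quaternions. -/
def SpH : Set ℍ[ℝ] := {q | q.re = 0 ∧ ‖q‖ = 1}

/-- The slice (complex plane) `L_I = {x + y I : x, y ∈ ℝ}`. -/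
def sliceL (I : ℍ[ℝ]) : Set ℍ[ℝ] := {q | ∃ x y : ℝ, q = (x : ℍ[ℝ]) + y • I}

/-- `f` has continuous partial derivatives on the `I`-slice part of `Ω` and satisfies the
Cauchy–Riemann equation `∂f/∂x + I ∂f/∂y = 0` there. -/
def SliceHolomorphicOn (I : ℍ[ℝ]) (f : ℍ[ℝ] → ℍ[ℝ]) (Ω : Set ℍ[ℝ]) : Prop :=
  ∃ fx fy : ℝ → ℝ → ℍ[ℝ],
    (∀ x y : ℝ, (x : ℍ[ℝ]) + y • I ∈ Ω →
      HasDerivAt (fun t : ℝ => f ((t : ℍ[ℝ]) + y • I)) (fx x y) x) ∧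
    (∀ x y : ℝ, (x : ℍ[ℝ]) + y • I ∈ Ω →
      HasDerivAt (fun t : ℝ => f ((x : ℍ[ℝ]) + t • I)) (fy x y) y) ∧
    ContinuousOn (fun p : ℝ × ℝ => fx p.1 p.2) {p : ℝ × ℝ | (p.1 : ℍ[ℝ]) + p.2 • I ∈ Ω} ∧
    ContinuousOn (fun p : ℝ × ℝ => fy p.1 p.2) {p : ℝ × ℝ | (p.1 : ℍ[ℝ]) + p.2 • I ∈ Ω} ∧
    ∀ x y : ℝ, (x : ℍ[ℝ]) + y • I ∈ Ω → fx x y + I * fy x y = 0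

/-- `f` is slice regular on `Ω`. -/
def SliceRegularOn (f : ℍ[ℝ] → ℍ[ℝ]) (Ω : Set ℍ[ℝ]) : Prop :=
  ∀ I ∈ SpH, SliceHolomorphicOn I f Ω

/-- `Ω` is axially symmetric. -/
def AxSymm (Ω : Set ℍ[ℝ]) : Prop :=
  ∀ (x y : ℝ), ∀ I ∈ SpH, (x : ℍ[ℝ]) + y • I ∈ Ω → ∀ J ∈ SpH, (x : ℍ[ℝ]) + y • J ∈ Ω

/-- `Ω` is an s-domain: a domain meeting the real axis whose slices are connected. -/
def IsSDomain (Ω : Set ℍ[ℝ]) : Prop :=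
  IsOpen Ω ∧ IsConnected Ω ∧ (∃ x : ℝ, (x : ℍ[ℝ]) ∈ Ω) ∧
    ∀ I ∈ SpH, IsConnected (Ω ∩ sliceL I)

/-- The axially symmetric completion of a set `S ⊆ ℍ`. -/
def symmComp (S : Set ℍ[ℝ]) : Set ℍ[ℝ] :=
  {q | ∃ (x y : ℝ) (I : ℍ[ℝ]), I ∈ SpH ∧ q = (x : ℍ[ℝ]) + y • I ∧
    ∃ J ∈ SpH, (x : ℍ[ℝ]) + y • J ∈ S}

/-- A domain of the slice `L_I`: a nonempty connected relatively open subset of `L_I`. -/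
def IsSliceDomain (I : ℍ[ℝ]) (D : Set ℍ[ℝ]) : Prop :=
  D ⊆ sliceL I ∧ IsConnected D ∧ IsOpen {p : ℝ × ℝ | (p.1 : ℍ[ℝ]) + p.2 • I ∈ D}

-- Auxiliary development
lemma spH_star {L : ℍ[ℝ]} (h : L ∈ SpH) : star L = -L :=
  Quaternion.star_eq_neg.2 h.1

lemma spH_normSq {L : ℍ[ℝ]} (h : L ∈ SpH) : normSq L = 1 := by
  have := Quaternion.normSq_eq_norm_mul_self L
  rw [h.2] at this; simpa using this

lemma spH_mul_self {L : ℍ[ℝ]} (h : L ∈ SpH) : L * L = -1 := by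
  have h1 : star L * L = ((normSq L : ℝ) : ℍ[ℝ]) := Quaternion.star_mul_self L
  rw [spH_star h, spH_normSq h] at h1
  simpa [neg_mul] using congrArg Neg.neg h1

lemma spH_neg {L : ℍ[ℝ]} (h : L ∈ SpH) : -L ∈ SpH :=
  ⟨by simp [h.1], by simpa using h.2⟩

lemma star_slice {L : ℍ[ℝ]} (h : L ∈ SpH) (x y : ℝ) :
    star ((x : ℍ[ℝ]) + y • L) = (x : ℍ[ℝ]) + (-y) • L := by
  rw [star_add, Quaternion.star_smul, spH_star h]
  simp [smul_neg]

lemma mem_sliceL (L : ℍ[ℝ]) (x y : ℝ) : (x : ℍ[ℝ]) + y • L ∈ sliceL L := ⟨x, y, rfl⟩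

lemma sliceL_comm {I X : ℍ[ℝ]} (hX : X ∈ sliceL I) : X * I = I * X := by
  obtain ⟨x, y, rfl⟩ := hX
  rw [add_mul, mul_add, smul_mul_assoc, mul_smul_comm, Quaternion.coe_mul_eq_smul,
    Quaternion.mul_coe_eq_smul]

lemma anticomm_of_perp {I J : ℍ[ℝ]} (hI : I ∈ SpH) (hJ : J ∈ SpH)
    (h : (I * J).re = 0) : J * I = -(I * J) := by
  have h1 : J * I = star (I * J) := by
    rw [star_mul, spH_star hI, spH_star hJ]; simp
  have h2 := Quaternion.star_eq_two_re_sub (I * J)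
  rw [h1, h2, h]; simp

lemma sliceL_swap {I J X : ℍ[ℝ]} (hI : I ∈ SpH) (hJI : J * I = -(I * J))
    (hX : X ∈ sliceL I) : J * X = star X * J := by
  obtain ⟨x, y, rfl⟩ := hX
  rw [star_slice hI, mul_add, add_mul, mul_smul_comm, smul_mul_assoc,
    Quaternion.mul_coe_eq_smul, Quaternion.coe_mul_eq_smul, hJI, smul_neg, ← neg_smul]

lemma sliceL_star {I X : ℍ[ℝ]} (hI : I ∈ SpH) (hX : X ∈ sliceL I) : star X ∈ sliceL I := by
  obtain ⟨x, y, rfl⟩ := hX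
  rw [star_slice hI]
  exact ⟨x, -y, rfl⟩

lemma exists_slice {I₀ : ℍ[ℝ]} (hI₀ : I₀ ∈ SpH) (q : ℍ[ℝ]) :
    ∃ (x y : ℝ) (L : ℍ[ℝ]), L ∈ SpH ∧ q = (x : ℍ[ℝ]) + y • L := by
  by_cases h : q - (q.re : ℍ[ℝ]) = 0
  · refine ⟨q.re, 0, I₀, hI₀, ?_⟩
    rw [zero_smul, add_zero]
    have := sub_eq_zero.1 h
    exact this
  · set v := q - (q.re : ℍ[ℝ]) with hv
    have hvre : v.re = 0 := by simp [hv, Quaternion.re_coe]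
    have hvn : ‖v‖ ≠ 0 := by simpa using h
    refine ⟨q.re, ‖v‖, ‖v‖⁻¹ • v, ⟨by simp [hvre], ?_⟩, ?_⟩
    · rw [norm_smul]
      simp [hvn]
    · rw [smul_smul, mul_inv_cancel₀ hvn, one_smul, hv]
      abel

-- Chunk B


lemma hasFDerivAt_of_partials {E : Type*} [NormedAddCommGroup E] [NormedSpace ℝ E]
    {f : ℂ → E} {fx fy : ℂ → E} {U : Set ℂ} (hU : IsOpen U) {z : ℂ} (hz : z ∈ U)
    (hx : ∀ w ∈ U, HasDerivAt (fun t : ℝ => f (⟨t, w.im⟩ : ℂ)) (fx w) w.re)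
    (hy : ∀ w ∈ U, HasDerivAt (fun t : ℝ => f (⟨w.re, t⟩ : ℂ)) (fy w) w.im)
    (hcy : ContinuousOn fy U) :
    HasFDerivAt f ((Complex.reCLM.smulRight (fx z)) + (Complex.imCLM.smulRight (fy z))) z := by
  rw [hasFDerivAt_iff_isLittleO_nhds_zero]
  have hzeta : (⟨z.re, z.im⟩ : ℂ) = z := rfl
  -- part 2 : horizontal increment
  have part2 : (fun h : ℂ => f (⟨z.re + h.re, z.im⟩ : ℂ) - f z - h.re • fx z)
      =o[nhds 0] (fun h : ℂ => h) := by
    have h1 := (hasDerivAt_iff_isLittleO.1 (hx z hz))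
    have h2 : Filter.Tendsto (fun h : ℂ => z.re + h.re) (nhds 0) (nhds z.re) := by
      have : Filter.Tendsto (fun h : ℂ => h.re) (nhds 0) (nhds 0) := by
        simpa using (Complex.continuous_re.tendsto 0)
      simpa using (tendsto_const_nhds (x := z.re)).add this
    have h3 := h1.comp_tendsto h2
    simp only [Function.comp_def, add_sub_cancel_left, hzeta] at h3
    refine h3.trans_isBigO ?_
    refine Asymptotics.isBigO_of_le _ (fun h => ?_)
    simpa [Real.norm_eq_abs] using Complex.abs_re_le_norm h
  -- part 1 : vertical increment
  have part1 : (fun h : ℂ => f (z + h) - f (⟨z.re + h.re, z.im⟩ : ℂ) - h.im • fy z)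
      =o[nhds 0] (fun h : ℂ => h) := by
    rw [Asymptotics.isLittleO_iff]
    intro ε hε
    have hcyz : ContinuousAt fy z := hcy.continuousAt (hU.mem_nhds hz)
    rcases Metric.continuousAt_iff.1 hcyz ε hε with ⟨δ₁, hδ₁, hball⟩
    rcases Metric.isOpen_iff.1 hU z hz with ⟨δ₂, hδ₂, hsub⟩
    set δ := min δ₁ δ₂ with hδdef
    have hδ : 0 < δ := lt_min hδ₁ hδ₂
    have hev : ∀ᶠ h : ℂ in nhds 0, ‖h‖ < δ / 2 := by
      have := Metric.ball_mem_nhds (0 : ℂ) (by positivity : (0:ℝ) < δ / 2)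
      filter_upwards [this] with h hh
      simpa [dist_eq_norm] using hh
    filter_upwards [hev] with h hh
    -- the path points
    set a : ℝ := z.re + h.re with ha
    have hmem : ∀ t : ℝ, |t| ≤ |h.im| → (⟨a, z.im + t⟩ : ℂ) ∈ Metric.ball z δ := by
      intro t ht
      rw [Metric.mem_ball, dist_eq_norm]
      have : (⟨a, z.im + t⟩ : ℂ) - z = ⟨h.re, t⟩ := by
        apply Complex.ext <;> simp [ha]
      rw [this]
      have h1 : ‖(⟨h.re, t⟩ : ℂ)‖ ≤ |h.re| + |t| := by
        have := Complex.norm_le_abs_re_add_abs_im (⟨h.re, t⟩ : ℂ)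
        simpa using this
      have h2 : |h.re| ≤ ‖h‖ := by
        exact Complex.abs_re_le_norm h
      have h3 : |t| ≤ ‖h‖ := by
        exact le_trans ht (Complex.abs_im_le_norm h)
      calc ‖(⟨h.re, t⟩ : ℂ)‖ ≤ |h.re| + |t| := h1
        _ ≤ ‖h‖ + ‖h‖ := add_le_add h2 h3
        _ < δ / 2 + δ / 2 := by linarith
        _ = δ := by ring
    have hmemU : ∀ t : ℝ, |t| ≤ |h.im| → (⟨a, z.im + t⟩ : ℂ) ∈ U := fun t ht =>
      hsub (Metric.ball_subset_ball (min_le_right _ _) (hmem t ht))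
    have hbound : ∀ t : ℝ, |t| ≤ |h.im| → ‖fy (⟨a, z.im + t⟩ : ℂ) - fy z‖ ≤ ε := by
      intro t ht
      have := hball (show dist (⟨a, z.im + t⟩ : ℂ) z < δ₁ from
        lt_of_lt_of_le (Metric.mem_ball.1 (hmem t ht)) (min_le_left _ _))
      rw [dist_eq_norm] at this
      exact this.le
    -- the auxiliary function
    set φ : ℝ → E := fun t => f (⟨a, z.im + t⟩ : ℂ) - t • fy z with hφ
    have hφderiv : ∀ t : ℝ, |t| ≤ |h.im| →
        HasDerivAt φ (fy (⟨a, z.im + t⟩ : ℂ) - fy z) t := by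
      intro t ht
      have hd1 : HasDerivAt (fun s : ℝ => f (⟨a, s⟩ : ℂ)) (fy (⟨a, z.im + t⟩ : ℂ)) (z.im + t) := by
        have := hy _ (hmemU t ht)
        simpa using this
      have hd2 : HasDerivAt (fun s : ℝ => z.im + s) (1 : ℝ) t :=
        (hasDerivAt_id t).const_add z.im
      have hd3 := hd1.scomp t hd2
      simp only [one_smul] at hd3
      have hd4 : HasDerivAt (fun s : ℝ => s • fy z) (fy z) t := by
        simpa using (hasDerivAt_id t).smul_const (fy z)
      exact hd3.sub hd4
    have hkey : ‖φ h.im - φ 0‖ ≤ ε * |h.im| := by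
      rcases le_or_gt 0 h.im with hs | hs
      · have := norm_image_sub_le_of_norm_deriv_le_segment'
          (f := φ) (f' := fun t => fy (⟨a, z.im + t⟩ : ℂ) - fy z) (a := 0) (b := h.im) (C := ε)
          (fun t ht => (hφderiv t (by rw [abs_of_nonneg (ht.1)]; rw [abs_of_nonneg hs]; exact ht.2)).hasDerivWithinAt)
          (fun t ht => hbound t (by rw [abs_of_nonneg (ht.1)]; rw [abs_of_nonneg hs]; exact ht.2.le))
          h.im (Set.right_mem_Icc.2 hs)
        simpa [abs_of_nonneg hs] using this
      · have h5 := norm_image_sub_le_of_norm_deriv_le_segment'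
          (f := φ) (f' := fun t => fy (⟨a, z.im + t⟩ : ℂ) - fy z) (a := h.im) (b := 0) (C := ε)
          (fun t ht => (hφderiv t (by
            rw [abs_of_nonpos ht.2, abs_of_neg hs]; linarith [ht.1])).hasDerivWithinAt)
          (fun t ht => hbound t (by
            rw [abs_of_nonpos ht.2.le, abs_of_neg hs]; linarith [ht.1]))
          0 (Set.right_mem_Icc.2 hs.le)
        calc ‖φ h.im - φ 0‖ = ‖φ 0 - φ h.im‖ := norm_sub_rev _ _
          _ ≤ ε * (0 - h.im) := h5
          _ = ε * |h.im| := by rw [abs_of_neg hs]; ring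
    have hzph : z + h = (⟨a, z.im + h.im⟩ : ℂ) := by
      apply Complex.ext <;> simp [ha]
    have : φ h.im - φ 0 = f (z + h) - f (⟨a, z.im⟩ : ℂ) - h.im • fy z := by
      simp [hφ, hzph]
      abel
    calc ‖f (z + h) - f (⟨z.re + h.re, z.im⟩ : ℂ) - h.im • fy z‖
        = ‖φ h.im - φ 0‖ := by rw [this]
      _ ≤ ε * |h.im| := hkey
      _ ≤ ε * ‖h‖ := by
          have hna : |h.im| ≤ ‖h‖ := by
            exact Complex.abs_im_le_norm h
          exact mul_le_mul_of_nonneg_left hna hε.le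
  -- combine
  have := part1.add part2
  refine this.congr' ?_ (by rfl)
  filter_upwards with h
  simp only [ContinuousLinearMap.add_apply, ContinuousLinearMap.smulRight_apply,
    Complex.reCLM_apply, Complex.imCLM_apply]
  abel

-- Chunk C
lemma coe_eq_smul_one (r : ℝ) : (r : ℍ[ℝ]) = r • (1 : ℍ[ℝ]) := by
  rw [← Quaternion.coe_mul_eq_smul, mul_one]

/-- The embedding of `ℂ` into `ℍ` along the slice of `L`. -/
def embC (L : ℍ[ℝ]) (z : ℂ) : ℍ[ℝ] := (z.re : ℍ[ℝ]) + z.im • L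

lemma embC_mul {L : ℍ[ℝ]} (hL : L ∈ SpH) (z w : ℂ) :
    embC L (z * w) = embC L z * embC L w := by
  unfold embC
  rw [Complex.mul_re, Complex.mul_im, coe_eq_smul_one, coe_eq_smul_one, coe_eq_smul_one]
  simp only [mul_add, add_mul, smul_mul_assoc, mul_smul_comm, one_mul, mul_one,
    spH_mul_self hL, smul_smul, smul_neg]
  module

lemma embC_coords (L : ℍ[ℝ]) (x y : ℝ) : embC L (⟨x, y⟩ : ℂ) = (x : ℍ[ℝ]) + y • L := rfl

/-- `embC` as a ring homomorphism. -/
def embRH (L : ℍ[ℝ]) (hL : L ∈ SpH) : ℂ →+* ℍ[ℝ] where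
  toFun := embC L
  map_one' := by simp [embC]
  map_mul' := fun z w => embC_mul hL z w
  map_zero' := by simp [embC]
  map_add' := fun z w => by
    unfold embC
    push_cast [Complex.add_re, Complex.add_im]
    rw [add_smul]; abel

lemma norm_embC {L : ℍ[ℝ]} (hL : L ∈ SpH) (z : ℂ) : ‖embC L z‖ = ‖z‖ := by
  have key : normSq (embC L z) = z.re ^ 2 + z.im ^ 2 := by
    have h1 : embC L z * star (embC L z) = ((z.re ^ 2 + z.im ^ 2 : ℝ) : ℍ[ℝ]) := by
      unfold embC
      rw [star_slice hL, coe_eq_smul_one, coe_eq_smul_one]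
      simp only [mul_add, add_mul, smul_mul_assoc, mul_smul_comm, one_mul, mul_one,
        spH_mul_self hL, smul_smul, smul_neg]
      module
    have h2 := Quaternion.self_mul_star (embC L z)
    rw [h1] at h2
    exact_mod_cast (Quaternion.coe_injective h2.symm)
  have h3 := Quaternion.normSq_eq_norm_mul_self (embC L z)
  rw [key] at h3
  have h4 : ‖z‖ * ‖z‖ = z.re ^ 2 + z.im ^ 2 := by
    rw [← sq, Complex.sq_norm, Complex.normSq_apply]; ring
  nlinarith [norm_nonneg (embC L z), norm_nonneg z]

lemma continuous_embC (L : ℍ[ℝ]) : Continuous (embC L) := by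
  unfold embC
  exact (Quaternion.continuous_coe.comp Complex.continuous_re).add
    (Complex.continuous_im.smul continuous_const)

lemma slice_coord_re {L : ℍ[ℝ]} (hL : L ∈ SpH) (x y : ℝ) : ((x : ℍ[ℝ]) + y • L).re = x := by
  simp [Quaternion.re_coe, hL.1]

lemma slice_mul_star {L : ℍ[ℝ]} (hL : L ∈ SpH) (x y : ℝ) :
    ((x : ℍ[ℝ]) + y • L) * star L = (-x) • L + (y : ℍ[ℝ]) := by
  rw [spH_star hL, mul_neg, add_mul, smul_mul_assoc, spH_mul_self hL, coe_eq_smul_one x,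
    smul_mul_assoc, one_mul, smul_neg, coe_eq_smul_one y]
  module

lemma slice_coord_im {L : ℍ[ℝ]} (hL : L ∈ SpH) (x y : ℝ) :
    (((x : ℍ[ℝ]) + y • L) * star L).re = y := by
  rw [slice_mul_star hL]
  simp [Quaternion.re_coe, hL.1]

/-- Uniqueness: a slice-holomorphic function vanishing on the reals vanishes on the slice. -/
lemma slice_eq_zero
    {Ω : Set ℍ[ℝ]} (hop : IsOpen Ω) {x₀ : ℝ} (hx₀ : (x₀ : ℍ[ℝ]) ∈ Ω)
    {L : ℍ[ℝ]} (hL : L ∈ SpH) (hconn : IsConnected (Ω ∩ sliceL L))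
    {v vx vy : ℝ → ℝ → ℍ[ℝ]}
    (hvx : ∀ x y : ℝ, (x : ℍ[ℝ]) + y • L ∈ Ω →
      HasDerivAt (fun t : ℝ => v t y) (vx x y) x)
    (hvy : ∀ x y : ℝ, (x : ℍ[ℝ]) + y • L ∈ Ω →
      HasDerivAt (fun t : ℝ => v x t) (vy x y) y)
    (hcx : ContinuousOn (fun p : ℝ × ℝ => vx p.1 p.2) {p : ℝ × ℝ | (p.1 : ℍ[ℝ]) + p.2 • L ∈ Ω})
    (hcy : ContinuousOn (fun p : ℝ × ℝ => vy p.1 p.2) {p : ℝ × ℝ | (p.1 : ℍ[ℝ]) + p.2 • L ∈ Ω})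
    (hcr : ∀ x y : ℝ, (x : ℍ[ℝ]) + y • L ∈ Ω → vx x y + L * vy x y = 0)
    (hreal : ∀ x : ℝ, (x : ℍ[ℝ]) ∈ Ω → v x 0 = 0) :
    ∀ x y : ℝ, (x : ℍ[ℝ]) + y • L ∈ Ω → v x y = 0 := by
  classical
  letI : Module ℂ ℍ[ℝ] := Module.compHom ℍ[ℝ] (embRH L hL)
  have hsmul_def : ∀ (z : ℂ) (q : ℍ[ℝ]), z • q = embC L z * q := fun z q => rfl
  letI : NormedSpace ℂ ℍ[ℝ] :=
    { norm_smul_le := fun z q => by rw [hsmul_def, norm_mul, norm_embC hL] }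
  set U : Set ℂ := {z : ℂ | embC L z ∈ Ω} with hU
  have hUopen : IsOpen U := (continuous_embC L).isOpen_preimage Ω hop
  set d : ℂ → ℍ[ℝ] := fun z => v z.re z.im with hd
  have hdiff : DifferentiableOn ℂ d U := by
    intro z hz
    have hmem : (z.re : ℍ[ℝ]) + z.im • L ∈ Ω := hz
    have hfd : HasFDerivAt d
        ((Complex.reCLM.smulRight (vx z.re z.im)) +
          (Complex.imCLM.smulRight (vy z.re z.im))) z := by
      refine hasFDerivAt_of_partials (f := d) (fx := fun w => vx w.re w.im)
        (fy := fun w => vy w.re w.im) hUopen hz ?_ ?_ ?_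
      · intro w hw; exact hvx w.re w.im hw
      · intro w hw; exact hvy w.re w.im hw
      · have cmap : Continuous fun w : ℂ => (w.re, w.im) :=
          Complex.continuous_re.prodMk Complex.continuous_im
        exact (hcy.comp cmap.continuousOn (fun w hw => hw))
    have hvyx : vy z.re z.im = L * vx z.re z.im := by
      have h0 := hcr z.re z.im hmem
      have h1 : L * vx z.re z.im + (L * L) * vy z.re z.im = 0 := by
        rw [mul_assoc, ← mul_add, h0, mul_zero]
      rw [spH_mul_self hL] at h1
      have := congrArg (fun t => t + vy z.re z.im) h1
      simpa [neg_one_mul, add_assoc] using this.symm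
    set T : ℂ →L[ℂ] ℍ[ℝ] :=
      (ContinuousLinearMap.id ℂ ℂ).smulRight (vx z.re z.im) with hT
    have hcoe : ∀ w : ℂ, T w = w.re • vx z.re z.im + w.im • vy z.re z.im := by
      intro w
      rw [hT]
      simp only [ContinuousLinearMap.smulRight_apply, ContinuousLinearMap.id_apply]
      rw [hsmul_def, hvyx]
      unfold embC
      rw [add_mul, Quaternion.coe_mul_eq_smul, smul_mul_assoc]
    have hEq : (T.restrictScalars ℝ) = (Complex.reCLM.smulRight (vx z.re z.im)) +
        (Complex.imCLM.smulRight (vy z.re z.im)) := by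
      apply ContinuousLinearMap.ext
      intro w
      have h1 : (T.restrictScalars ℝ) w = T w := rfl
      rw [h1, hcoe w]
      simp
    have hfd2 : HasFDerivAt d (T.restrictScalars ℝ) z := by
      rw [hEq]; exact hfd
    have hfd3 : HasFDerivAt (𝕜 := ℂ) d T z := by
      rw [hasFDerivAt_iff_isLittleO_nhds_zero] at hfd2 ⊢
      simpa [ContinuousLinearMap.coe_restrictScalars'] using hfd2
    exact hfd3.differentiableAt.differentiableWithinAt
  have hanal : AnalyticOnNhd ℂ d U := hdiff.analyticOnNhd hUopen
  -- connectivity of U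
  set ρ : ℍ[ℝ] → ℂ := fun q => ⟨q.re, (q * star L).re⟩ with hρ
  have hρcont : Continuous ρ := by
    have c1 : Continuous fun q : ℍ[ℝ] => q.re := Quaternion.continuous_re
    have c2 : Continuous fun q : ℍ[ℝ] => (q * star L).re :=
      Quaternion.continuous_re.comp (continuous_id.mul continuous_const)
    have : Continuous fun q : ℍ[ℝ] => ((q.re : ℂ) + ((q * star L).re : ℂ) * Complex.I) :=
      (Complex.continuous_ofReal.comp c1).add
        ((Complex.continuous_ofReal.comp c2).mul continuous_const)
    convert this using 2 with q
    apply Complex.ext <;> simp [hρ]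
  have himg : U = ρ '' (Ω ∩ sliceL L) := by
    ext z
    constructor
    · intro hz
      refine ⟨embC L z, ⟨hz, ⟨z.re, z.im, rfl⟩⟩, ?_⟩
      rw [hρ]
      have h1 : (embC L z).re = z.re := slice_coord_re hL z.re z.im
      have h2 : ((embC L z) * star L).re = z.im := slice_coord_im hL z.re z.im
      apply Complex.ext
      · simpa using h1
      · simpa using h2
    · rintro ⟨q, ⟨hq, ⟨x, y, rfl⟩⟩, rfl⟩
      show embC L _ ∈ Ω
      have h1 : ρ ((x : ℍ[ℝ]) + y • L) = ⟨x, y⟩ := by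
        rw [hρ]
        apply Complex.ext
        · simpa using slice_coord_re hL x y
        · simpa using slice_coord_im hL x y
      rw [h1, embC_coords]
      exact hq
  have hUconn : IsPreconnected U := by
    rw [himg]
    exact (hconn.image ρ hρcont.continuousOn).isPreconnected
  have hz₀ : ((x₀ : ℂ)) ∈ U := by
    show embC L (x₀ : ℂ) ∈ Ω
    simpa [embC] using hx₀
  have hfreq : ∃ᶠ z in nhdsWithin (x₀ : ℂ) {(x₀ : ℂ)}ᶜ, d z = 0 := by
    set u : ℕ → ℂ := fun n => ((x₀ + 1 / (n + 1) : ℝ) : ℂ) with hu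
    have hur : Filter.Tendsto (fun n : ℕ => x₀ + 1 / (n + 1 : ℝ)) Filter.atTop (nhds x₀) := by
      have := tendsto_one_div_add_atTop_nhds_zero_nat (𝕜 := ℝ)
      simpa using (tendsto_const_nhds (x := x₀)).add this
    have hne : ∀ n : ℕ, u n ≠ (x₀ : ℂ) := by
      intro n h
      rw [hu] at h
      have := Complex.ofReal_injective h
      have h2 : (1 : ℝ) / (n + 1) ≠ 0 := by positivity
      apply h2
      linarith
    have hut : Filter.Tendsto u Filter.atTop (nhdsWithin (x₀ : ℂ) {(x₀ : ℂ)}ᶜ) := by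
      apply tendsto_nhdsWithin_of_tendsto_nhds_of_eventually_within
      · exact Complex.continuous_ofReal.continuousAt.tendsto.comp hur
      · exact Filter.Eventually.of_forall fun n => hne n
    have hev : ∀ᶠ n in Filter.atTop, d (u n) = 0 := by
      have hWopen : IsOpen {t : ℝ | (t : ℍ[ℝ]) ∈ Ω} := hop.preimage Quaternion.continuous_coe
      have hWmem : x₀ ∈ {t : ℝ | (t : ℍ[ℝ]) ∈ Ω} := hx₀
      have := hur.eventually (hWopen.mem_nhds hWmem)
      filter_upwards [this] with n hn
      have : d (u n) = v (x₀ + 1 / (n + 1 : ℝ)) 0 := by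
        rw [hu, hd]
        simp only [Complex.ofReal_re, Complex.ofReal_im]
      rw [this]
      exact hreal _ hn
    exact hut.frequently hev.frequently
  have hzero := hanal.eqOn_zero_of_preconnected_of_frequently_eq_zero hUconn hz₀ hfreq
  intro x y hxy
  have hmem : ((⟨x, y⟩ : ℂ)) ∈ U := hxy
  have := hzero hmem
  simpa [hd] using this

-- Chunk D : representation formula
lemma axs_mem {Ω : Set ℍ[ℝ]} (hax : AxSymm Ω) {L M : ℍ[ℝ]} (hL : L ∈ SpH) (hM : M ∈ SpH)
    {x y : ℝ} (hmem : (x : ℍ[ℝ]) + y • L ∈ Ω) : (x : ℍ[ℝ]) + y • M ∈ Ω :=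
  hax x y L hL hmem M hM

lemma axs_mem_neg {Ω : Set ℍ[ℝ]} (hax : AxSymm Ω) {L M : ℍ[ℝ]} (hL : L ∈ SpH) (hM : M ∈ SpH)
    {x y : ℝ} (hmem : (x : ℍ[ℝ]) + y • L ∈ Ω) : (x : ℍ[ℝ]) + (-y) • M ∈ Ω := by
  have := hax x y L hL hmem (-M) (spH_neg hM)
  rwa [smul_neg, ← neg_smul] at this

lemma cr_swap {I a b : ℍ[ℝ]} (hI2 : I * I = -1) (h : a + I * b = 0) : b = I * a := by
  have h1 : I * a + (I * I) * b = 0 := by rw [mul_assoc, ← mul_add, h, mul_zero]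
  rw [hI2, neg_one_mul] at h1
  have := congrArg (fun t => t + b) h1
  simpa [add_assoc] using this.symm

lemma cr_algebra {R : Type*} [Ring R] (Lq Iq gx fxp fxm : R)
    (hI2 : Iq * Iq = -1) (hL2 : Lq * Lq = -1) :
    (2 * gx - (fxp + fxm) - Lq * (Iq * (fxm - fxp)))
      + Lq * (2 * (Lq * gx) - (Iq * fxp + -(Iq * fxm))
        - Lq * (Iq * (-(Iq * fxm) - Iq * fxp))) = 0 := by
  have e1 : ∀ c : R, Iq * (Iq * c) = -c := fun c => by
    rw [← mul_assoc, hI2, neg_one_mul]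
  have e2 : ∀ c : R, Lq * (Lq * c) = -c := fun c => by
    rw [← mul_assoc, hL2, neg_one_mul]
  have h3 : Iq * (-(Iq * fxm) - Iq * fxp) = fxm + fxp := by
    rw [mul_sub, mul_neg, e1, e1, neg_neg, sub_neg_eq_add]
  rw [h3]
  have h4 : Lq * (2 * (Lq * gx) - (Iq * fxp + -(Iq * fxm)) - Lq * (fxm + fxp))
      = 2 * (Lq * (Lq * gx)) - (Lq * (Iq * fxp) + -(Lq * (Iq * fxm))) - Lq * (Lq * (fxm + fxp)) := by
    rw [mul_sub, mul_sub, mul_add, mul_neg, ← mul_assoc, ← mul_assoc, ← mul_assoc, ← mul_assoc]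
    noncomm_ring
  rw [h4, e2, e2]
  noncomm_ring

lemma rep_formula
    {Ω : Set ℍ[ℝ]} (hop : IsOpen Ω) {x₀ : ℝ} (hx₀ : (x₀ : ℍ[ℝ]) ∈ Ω) (hax : AxSymm Ω)
    (hsl : ∀ L ∈ SpH, IsConnected (Ω ∩ sliceL L))
    {h : ℍ[ℝ] → ℍ[ℝ]} (hreg : SliceRegularOn h Ω)
    {I : ℍ[ℝ]} (hI : I ∈ SpH) {L : ℍ[ℝ]} (hL : L ∈ SpH) :
    ∀ x y : ℝ, (x : ℍ[ℝ]) + y • L ∈ Ω →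
      2 * h ((x : ℍ[ℝ]) + y • L) =
        (h ((x : ℍ[ℝ]) + y • I) + h ((x : ℍ[ℝ]) + (-y) • I))
          + L * (I * (h ((x : ℍ[ℝ]) + (-y) • I) - h ((x : ℍ[ℝ]) + y • I))) := by
  obtain ⟨fx, fy, hfx, hfy, hcfx, hcfy, hfcr⟩ := hreg I hI
  obtain ⟨gx, gy, hgx, hgy, hcgx, hcgy, hgcr⟩ := hreg L hL
  have hI2 := spH_mul_self hI
  have hL2 := spH_mul_self hL
  have key := slice_eq_zero hop hx₀ hL (hsl L hL)
    (v := fun x y => 2 * h ((x : ℍ[ℝ]) + y • L)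
      - (h ((x : ℍ[ℝ]) + y • I) + h ((x : ℍ[ℝ]) + (-y) • I))
      - L * (I * (h ((x : ℍ[ℝ]) + (-y) • I) - h ((x : ℍ[ℝ]) + y • I))))
    (vx := fun x y => 2 * gx x y - (fx x y + fx x (-y)) - L * (I * (fx x (-y) - fx x y)))
    (vy := fun x y => 2 * gy x y - (fy x y + -(fy x (-y))) - L * (I * (-(fy x (-y)) - fy x y)))
    ?_ ?_ ?_ ?_ ?_ ?_
  · intro x y hmem
    have h0 : 2 * h ((x : ℍ[ℝ]) + y • L)
        - (h ((x : ℍ[ℝ]) + y • I) + h ((x : ℍ[ℝ]) + (-y) • I))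
        - L * (I * (h ((x : ℍ[ℝ]) + (-y) • I) - h ((x : ℍ[ℝ]) + y • I))) = 0 := key x y hmem
    rw [sub_sub, sub_eq_zero] at h0
    exact h0
  · -- x-derivative
    intro x y hmem
    have mI : (x : ℍ[ℝ]) + y • I ∈ Ω := axs_mem hax hL hI hmem
    have mIn : (x : ℍ[ℝ]) + (-y) • I ∈ Ω := axs_mem_neg hax hL hI hmem
    have d1 := (hgx x y hmem).const_mul (2 : ℍ[ℝ])
    have d2 := hfx x y mI
    have d3 := hfx x (-y) mIn
    have d4 := ((d3.sub d2).const_mul I).const_mul L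
    exact (d1.sub (d2.add d3)).sub d4
  · -- y-derivative
    intro x y hmem
    have mI : (x : ℍ[ℝ]) + y • I ∈ Ω := axs_mem hax hL hI hmem
    have mIn : (x : ℍ[ℝ]) + (-y) • I ∈ Ω := axs_mem_neg hax hL hI hmem
    have e1 := (hgy x y hmem).const_mul (2 : ℍ[ℝ])
    have e2 := hfy x y mI
    have e3pre := hfy x (-y) mIn
    have hneg : HasDerivAt (fun t : ℝ => -t) (-1 : ℝ) y := (hasDerivAt_id y).neg
    have e3 : HasDerivAt (fun t : ℝ => h ((x : ℍ[ℝ]) + (-t) • I)) (-(fy x (-y))) y := by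
      have := e3pre.scomp y hneg
      simpa [Function.comp_def] using this
    have e4 := ((e3.sub e2).const_mul I).const_mul L
    exact (e1.sub (e2.add e3)).sub e4
  · -- continuity of vx
    have hsub : {p : ℝ × ℝ | (p.1 : ℍ[ℝ]) + p.2 • L ∈ Ω} ⊆
        {p : ℝ × ℝ | (p.1 : ℍ[ℝ]) + p.2 • I ∈ Ω} :=
      fun p hp => axs_mem hax hL hI hp
    have hmapneg : Set.MapsTo (fun p : ℝ × ℝ => (p.1, -p.2))
        {p : ℝ × ℝ | (p.1 : ℍ[ℝ]) + p.2 • L ∈ Ω}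
        {p : ℝ × ℝ | (p.1 : ℍ[ℝ]) + p.2 • I ∈ Ω} :=
      fun p hp => axs_mem_neg hax hL hI hp
    have cneg : Continuous fun p : ℝ × ℝ => (p.1, -p.2) :=
      continuous_fst.prodMk continuous_snd.neg
    have c1 : ContinuousOn (fun p : ℝ × ℝ => fx p.1 (-p.2))
        {p : ℝ × ℝ | (p.1 : ℍ[ℝ]) + p.2 • L ∈ Ω} :=
      hcfx.comp cneg.continuousOn hmapneg
    exact ((continuousOn_const.mul hcgx).sub ((hcfx.mono hsub).add c1)).sub
      (continuousOn_const.mul (continuousOn_const.mul (c1.sub (hcfx.mono hsub))))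
  · -- continuity of vy
    have hsub : {p : ℝ × ℝ | (p.1 : ℍ[ℝ]) + p.2 • L ∈ Ω} ⊆
        {p : ℝ × ℝ | (p.1 : ℍ[ℝ]) + p.2 • I ∈ Ω} :=
      fun p hp => axs_mem hax hL hI hp
    have hmapneg : Set.MapsTo (fun p : ℝ × ℝ => (p.1, -p.2))
        {p : ℝ × ℝ | (p.1 : ℍ[ℝ]) + p.2 • L ∈ Ω}
        {p : ℝ × ℝ | (p.1 : ℍ[ℝ]) + p.2 • I ∈ Ω} :=
      fun p hp => axs_mem_neg hax hL hI hp
    have cneg : Continuous fun p : ℝ × ℝ => (p.1, -p.2) :=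
      continuous_fst.prodMk continuous_snd.neg
    have c1 : ContinuousOn (fun p : ℝ × ℝ => fy p.1 (-p.2))
        {p : ℝ × ℝ | (p.1 : ℍ[ℝ]) + p.2 • L ∈ Ω} :=
      hcfy.comp cneg.continuousOn hmapneg
    exact ((continuousOn_const.mul hcgy).sub ((hcfy.mono hsub).add c1.neg)).sub
      (continuousOn_const.mul (continuousOn_const.mul (c1.neg.sub (hcfy.mono hsub))))
  · -- Cauchy-Riemann
    intro x y hmem
    have mI : (x : ℍ[ℝ]) + y • I ∈ Ω := axs_mem hax hL hI hmem
    have mIn : (x : ℍ[ℝ]) + (-y) • I ∈ Ω := axs_mem_neg hax hL hI hmem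
    have r1 : fy x y = I * fx x y := cr_swap hI2 (hfcr x y mI)
    have r2 : fy x (-y) = I * fx x (-y) := cr_swap hI2 (hfcr x (-y) mIn)
    have r3 : gy x y = L * gx x y := cr_swap hL2 (hgcr x y hmem)
    show (2 * gx x y - (fx x y + fx x (-y)) - L * (I * (fx x (-y) - fx x y)))
      + L * (2 * gy x y - (fy x y + -(fy x (-y))) - L * (I * (-(fy x (-y)) - fy x y))) = 0
    rw [r1, r2, r3]
    exact cr_algebra L I (gx x y) (fx x y) (fx x (-y)) hI2 hL2
  · -- vanishing on the reals
    intro x hx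
    simp only [neg_zero, zero_smul, add_zero]
    noncomm_ring

-- Chunk E : product identities
section ProdIds
variable {R : Type*} [Ring R]

lemma mulJ (j P1 P2 Q1 Q2 sQ1 sQ2 : R) (hjj : j * j = -1)
    (h1 : j * Q1 = sQ1 * j) (h2 : j * Q2 = sQ2 * j) :
    (P1 + P2 * j) * (Q1 + Q2 * j) = (P1 * Q1 - P2 * sQ2) + (P1 * Q2 + P2 * sQ1) * j := by
  have k1 : P2 * j * Q1 = P2 * sQ1 * j := by rw [mul_assoc, h1, ← mul_assoc]
  have k2 : P2 * j * (Q2 * j) = -(P2 * sQ2) := by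
    rw [mul_assoc, ← mul_assoc j, h2, mul_assoc, hjj, mul_neg_one, mul_neg]
  calc (P1 + P2 * j) * (Q1 + Q2 * j)
      = P1 * Q1 + P1 * (Q2 * j) + (P2 * j * Q1 + P2 * j * (Q2 * j)) := by noncomm_ring
    _ = P1 * Q1 + P1 * (Q2 * j) + (P2 * sQ1 * j + -(P2 * sQ2)) := by rw [k1, k2]
    _ = _ := by noncomm_ring

lemma iconj (i j U1 U2 w : R) (hii : i * i = -1) (hji : j * i = -(i * j))
    (h1 : U1 * i = i * U1) (h2 : U2 * i = i * U2) :
    i * ((U1 + U2 * j) * (i * w)) = (-U1 + U2 * j) * w := by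
  have t1 : i * (U1 * (i * w)) = -(U1 * w) := by
    rw [← mul_assoc, ← h1, mul_assoc, ← mul_assoc i i w, hii, neg_one_mul, mul_neg]
  have hijij : (i * j) * i = j := by
    rw [mul_assoc, hji, mul_neg, ← mul_assoc, hii, neg_one_mul, neg_neg]
  have t2 : i * (U2 * (j * (i * w))) = U2 * (j * w) := by
    rw [← mul_assoc, ← h2, mul_assoc]
    congr 1
    rw [← mul_assoc, ← mul_assoc, hijij]
  calc i * ((U1 + U2 * j) * (i * w))
      = i * (U1 * (i * w)) + i * (U2 * (j * (i * w))) := by noncomm_ring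
    _ = -(U1 * w) + U2 * (j * w) := by rw [t1, t2]
    _ = _ := by noncomm_ring

lemma prod_identities (i j A1 A2 B1 B2 C1 C2 D1 D2 sC1 sC2 sD1 sD2 : R)
    (hii : i * i = -1) (hjj : j * j = -1) (hji : j * i = -(i * j))
    (hA1 : A1 * i = i * A1) (hA2 : A2 * i = i * A2)
    (hB1 : B1 * i = i * B1) (hB2 : B2 * i = i * B2)
    (hjC1 : j * C1 = sC1 * j) (hjC2 : j * C2 = sC2 * j)
    (hjD1 : j * D1 = sD1 * j) (hjD2 : j * D2 = sD2 * j) :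
    2 * (((A1 * C1 - A2 * sD2) + (A1 * C2 + A2 * sD1) * j)
        + ((B1 * D1 - B2 * sC2) + (B1 * D2 + B2 * sC1) * j))
      = ((A1 + A2 * j) + (B1 + B2 * j)) * ((C1 + C2 * j) + (D1 + D2 * j))
        - i * (((B1 + B2 * j) - (A1 + A2 * j)) * (i * ((D1 + D2 * j) - (C1 + C2 * j))))
    ∧ 2 * (((B1 * D1 - B2 * sC2) + (B1 * D2 + B2 * sC1) * j)
        - ((A1 * C1 - A2 * sD2) + (A1 * C2 + A2 * sD1) * j))
      = ((B1 + B2 * j) - (A1 + A2 * j)) * ((C1 + C2 * j) + (D1 + D2 * j))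
        - i * (((A1 + A2 * j) + (B1 + B2 * j)) * (i * ((D1 + D2 * j) - (C1 + C2 * j)))) := by
  have s1 : (A1 + A2 * j) + (B1 + B2 * j) = (A1 + B1) + (A2 + B2) * j := by noncomm_ring
  have s2 : (C1 + C2 * j) + (D1 + D2 * j) = (C1 + D1) + (C2 + D2) * j := by noncomm_ring
  have s3 : (B1 + B2 * j) - (A1 + A2 * j) = (B1 - A1) + (B2 - A2) * j := by noncomm_ring
  have s4 : (D1 + D2 * j) - (C1 + C2 * j) = (D1 - C1) + (D2 - C2) * j := by noncomm_ring
  have jCD1 : j * (C1 + D1) = (sC1 + sD1) * j := by rw [mul_add, hjC1, hjD1, add_mul]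
  have jCD2 : j * (C2 + D2) = (sC2 + sD2) * j := by rw [mul_add, hjC2, hjD2, add_mul]
  have jDC1 : j * (D1 - C1) = (sD1 - sC1) * j := by rw [mul_sub, hjC1, hjD1, sub_mul]
  have jDC2 : j * (D2 - C2) = (sD2 - sC2) * j := by rw [mul_sub, hjC2, hjD2, sub_mul]
  have iBA1 : (B1 - A1) * i = i * (B1 - A1) := by rw [sub_mul, hB1, hA1, mul_sub]
  have iBA2 : (B2 - A2) * i = i * (B2 - A2) := by rw [sub_mul, hB2, hA2, mul_sub]
  have iAB1 : (A1 + B1) * i = i * (A1 + B1) := by rw [add_mul, hB1, hA1, mul_add]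
  have iAB2 : (A2 + B2) * i = i * (A2 + B2) := by rw [add_mul, hB2, hA2, mul_add]
  have m1 := mulJ j (A1 + B1) (A2 + B2) (C1 + D1) (C2 + D2) (sC1 + sD1) (sC2 + sD2) hjj jCD1 jCD2
  have m2 := iconj i j (B1 - A1) (B2 - A2) ((D1 - C1) + (D2 - C2) * j) hii hji iBA1 iBA2
  have m2' := mulJ j (-(B1 - A1)) (B2 - A2) (D1 - C1) (D2 - C2) (sD1 - sC1) (sD2 - sC2) hjj jDC1 jDC2
  have m3 := iconj i j (A1 + B1) (A2 + B2) ((D1 - C1) + (D2 - C2) * j) hii hji iAB1 iAB2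
  have m3' := mulJ j (-(A1 + B1)) (A2 + B2) (D1 - C1) (D2 - C2) (sD1 - sC1) (sD2 - sC2) hjj jDC1 jDC2
  have m4 := mulJ j (B1 - A1) (B2 - A2) (C1 + D1) (C2 + D2) (sC1 + sD1) (sC2 + sD2) hjj jCD1 jCD2
  constructor
  · rw [s1, s2, s3, s4, m1, m2, m2']
    noncomm_ring
  · rw [s1, s2, s3, s4, m3, m3', m4]
    noncomm_ring

end ProdIds

-- Chunk F : conjugation helpers
lemma quat_re_comm (a b : ℍ[ℝ]) : (a * b).re = (b * a).re := by
  simp [Quaternion.re_mul]; ring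

lemma spH_conj {A L : ℍ[ℝ]} (hL : L ∈ SpH) (hA : A ≠ 0) : A⁻¹ * L * A ∈ SpH := by
  constructor
  · have h1 : (A⁻¹ * L * A).re = (A * (A⁻¹ * L)).re := quat_re_comm _ _
    rw [← mul_assoc, mul_inv_cancel₀ hA, one_mul] at h1
    rw [h1, hL.1]
  · rw [norm_mul, norm_mul, norm_inv, hL.2]
    rw [mul_one]
    exact inv_mul_cancel₀ (norm_ne_zero_iff.2 hA)

lemma conj_slice {A L : ℍ[ℝ]} (hA : A ≠ 0) (x y : ℝ) :
    A⁻¹ * ((x : ℍ[ℝ]) + y • L) * A = (x : ℍ[ℝ]) + y • (A⁻¹ * L * A) := by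
  rw [mul_add, add_mul, mul_smul_comm, smul_mul_assoc]
  congr 1
  rw [← Quaternion.coe_commutes, mul_assoc, inv_mul_cancel₀ hA, mul_one]

lemma quat_num_ne (n : ℕ) [h : n.AtLeastTwo] : (OfNat.ofNat n : ℍ[ℝ]) ≠ 0 := by
  intro hzero
  have h2 : ((n : ℕ) : ℍ[ℝ]) = 0 := by
    rw [show ((n : ℕ) : ℍ[ℝ]) = (OfNat.ofNat n : ℍ[ℝ]) from Nat.cast_ofNat]
    exact hzero
  have h3 := congrArg QuaternionAlgebra.re h2
  rw [Quaternion.re_natCast] at h3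
  simp only [Quaternion.re_zero] at h3
  have hne : (n : ℝ) ≠ 0 := by
    have := h.prop
    positivity
  exact hne h3

set_option maxHeartbeats 1000000 in
/-- Zeros of the regular product. -/
theorem zeros_of_product
    (Ω : Set ℍ[ℝ]) (hΩ : IsSDomain Ω) (hax : AxSymm Ω)
    (f g : ℍ[ℝ] → ℍ[ℝ]) (hf : SliceRegularOn f Ω) (hg : SliceRegularOn g Ω)
    (I J : ℍ[ℝ]) (hI : I ∈ SpH) (hJ : J ∈ SpH) (hperp : (I * star J).re = 0)
    (F G H K : ℍ[ℝ] → ℍ[ℝ])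
    (hF : SliceHolomorphicOn I F (Ω ∩ sliceL I)) (hFm : Set.MapsTo F (Ω ∩ sliceL I) (sliceL I))
    (hG : SliceHolomorphicOn I G (Ω ∩ sliceL I)) (hGm : Set.MapsTo G (Ω ∩ sliceL I) (sliceL I))
    (hH : SliceHolomorphicOn I H (Ω ∩ sliceL I)) (hHm : Set.MapsTo H (Ω ∩ sliceL I) (sliceL I))
    (hK : SliceHolomorphicOn I K (Ω ∩ sliceL I)) (hKm : Set.MapsTo K (Ω ∩ sliceL I) (sliceL I))
    (hfs : ∀ z ∈ Ω ∩ sliceL I, f z = F z + G z * J)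
    (hgs : ∀ z ∈ Ω ∩ sliceL I, g z = H z + K z * J)
    -- `fg` is the regular product `f ∗ g`
    (fg : ℍ[ℝ] → ℍ[ℝ]) (hfgreg : SliceRegularOn fg Ω)
    (hfg : ∀ z ∈ Ω ∩ sliceL I, fg z =
      (F z * H z - G z * star (K (star z))) +
        (F z * K z + G z * star (H (star z))) * J) :
    ∀ q ∈ Ω, (fg q = 0 ↔ f q = 0 ∨ (f q ≠ 0 ∧ g ((f q)⁻¹ * q * f q) = 0)) := by
  intro q hq
  obtain ⟨hop, hconnΩ, ⟨x₀, hx₀⟩, hsl⟩ := hΩ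
  obtain ⟨x, y, L, hL, rfl⟩ := exists_slice hI q
  have hI2 := spH_mul_self hI
  have hJ2 := spH_mul_self hJ
  have hL2 := spH_mul_self hL
  have hIJre : (I * J).re = 0 := by
    have h1 := hperp
    rw [spH_star hJ, mul_neg] at h1
    have h2 : -(I * J).re = 0 := by simpa using h1
    linarith
  have hji : J * I = -(I * J) := anticomm_of_perp hI hJ hIJre
  have hqp : ((x : ℍ[ℝ]) + y • I) ∈ Ω := axs_mem hax hL hI hq
  have hqm : ((x : ℍ[ℝ]) + (-y) • I) ∈ Ω := axs_mem_neg hax hL hI hq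
  have hqpI : ((x : ℍ[ℝ]) + y • I) ∈ Ω ∩ sliceL I := ⟨hqp, ⟨x, y, rfl⟩⟩
  have hqmI : ((x : ℍ[ℝ]) + (-y) • I) ∈ Ω ∩ sliceL I := ⟨hqm, ⟨x, -y, rfl⟩⟩
  have hstp : star ((x : ℍ[ℝ]) + y • I) = ((x : ℍ[ℝ]) + (-y) • I) := star_slice hI x y
  have hstm : star ((x : ℍ[ℝ]) + (-y) • I) = ((x : ℍ[ℝ]) + y • I) := by rw [star_slice hI x (-y), neg_neg]
  have ha := hfs ((x : ℍ[ℝ]) + y • I) hqpI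
  have hb := hfs ((x : ℍ[ℝ]) + (-y) • I) hqmI
  have hc := hgs ((x : ℍ[ℝ]) + y • I) hqpI
  have hd := hgs ((x : ℍ[ℝ]) + (-y) • I) hqmI
  have hp : fg ((x : ℍ[ℝ]) + y • I) = (F ((x : ℍ[ℝ]) + y • I) * H ((x : ℍ[ℝ]) + y • I) - G ((x : ℍ[ℝ]) + y • I) * star (K ((x : ℍ[ℝ]) + (-y) • I)))
      + (F ((x : ℍ[ℝ]) + y • I) * K ((x : ℍ[ℝ]) + y • I) + G ((x : ℍ[ℝ]) + y • I) * star (H ((x : ℍ[ℝ]) + (-y) • I))) * J := by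
    have := hfg ((x : ℍ[ℝ]) + y • I) hqpI
    rwa [hstp] at this
  have hp' : fg ((x : ℍ[ℝ]) + (-y) • I) = (F ((x : ℍ[ℝ]) + (-y) • I) * H ((x : ℍ[ℝ]) + (-y) • I) - G ((x : ℍ[ℝ]) + (-y) • I) * star (K ((x : ℍ[ℝ]) + y • I)))
      + (F ((x : ℍ[ℝ]) + (-y) • I) * K ((x : ℍ[ℝ]) + (-y) • I) + G ((x : ℍ[ℝ]) + (-y) • I) * star (H ((x : ℍ[ℝ]) + y • I))) * J := by
    have := hfg ((x : ℍ[ℝ]) + (-y) • I) hqmI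
    rwa [hstm] at this
  obtain ⟨id1, id2⟩ := prod_identities I J (F ((x : ℍ[ℝ]) + y • I)) (G ((x : ℍ[ℝ]) + y • I)) (F ((x : ℍ[ℝ]) + (-y) • I)) (G ((x : ℍ[ℝ]) + (-y) • I))
    (H ((x : ℍ[ℝ]) + y • I)) (K ((x : ℍ[ℝ]) + y • I)) (H ((x : ℍ[ℝ]) + (-y) • I)) (K ((x : ℍ[ℝ]) + (-y) • I))
    (star (H ((x : ℍ[ℝ]) + y • I))) (star (K ((x : ℍ[ℝ]) + y • I))) (star (H ((x : ℍ[ℝ]) + (-y) • I))) (star (K ((x : ℍ[ℝ]) + (-y) • I))) hI2 hJ2 hji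
    (sliceL_comm (hFm hqpI)) (sliceL_comm (hGm hqpI))
    (sliceL_comm (hFm hqmI)) (sliceL_comm (hGm hqmI))
    (sliceL_swap hI hji (hHm hqpI)) (sliceL_swap hI hji (hKm hqpI))
    (sliceL_swap hI hji (hHm hqmI)) (sliceL_swap hI hji (hKm hqmI))
  rw [← hp, ← hp', ← ha, ← hb, ← hc, ← hd] at id1 id2
  have rf := rep_formula hop hx₀ hax hsl hf hI hL x y hq
  have rfg := rep_formula hop hx₀ hax hsl hfgreg hI hL x y hq
  -- the master formula for 4 * fg q
  have key4 : 4 * fg ((x : ℍ[ℝ]) + y • L) =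
      ((f ((x : ℍ[ℝ]) + y • I) + f ((x : ℍ[ℝ]) + (-y) • I)) * (g ((x : ℍ[ℝ]) + y • I) + g ((x : ℍ[ℝ]) + (-y) • I)) - I * ((f ((x : ℍ[ℝ]) + (-y) • I) - f ((x : ℍ[ℝ]) + y • I)) * (I * (g ((x : ℍ[ℝ]) + (-y) • I) - g ((x : ℍ[ℝ]) + y • I)))))
        + (L * (I * ((f ((x : ℍ[ℝ]) + (-y) • I) - f ((x : ℍ[ℝ]) + y • I)) * (g ((x : ℍ[ℝ]) + y • I) + g ((x : ℍ[ℝ]) + (-y) • I)))) + L * ((f ((x : ℍ[ℝ]) + y • I) + f ((x : ℍ[ℝ]) + (-y) • I)) * (I * (g ((x : ℍ[ℝ]) + (-y) • I) - g ((x : ℍ[ℝ]) + y • I))))) := by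
    have e : I * ((f ((x : ℍ[ℝ]) + (-y) • I) - f ((x : ℍ[ℝ]) + y • I)) * (g ((x : ℍ[ℝ]) + y • I) + g ((x : ℍ[ℝ]) + (-y) • I)) - I * ((f ((x : ℍ[ℝ]) + y • I) + f ((x : ℍ[ℝ]) + (-y) • I)) * (I * (g ((x : ℍ[ℝ]) + (-y) • I) - g ((x : ℍ[ℝ]) + y • I)))))
        = I * ((f ((x : ℍ[ℝ]) + (-y) • I) - f ((x : ℍ[ℝ]) + y • I)) * (g ((x : ℍ[ℝ]) + y • I) + g ((x : ℍ[ℝ]) + (-y) • I))) + (f ((x : ℍ[ℝ]) + y • I) + f ((x : ℍ[ℝ]) + (-y) • I)) * (I * (g ((x : ℍ[ℝ]) + (-y) • I) - g ((x : ℍ[ℝ]) + y • I))) := by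
      rw [mul_sub, ← mul_assoc I I ((f ((x : ℍ[ℝ]) + y • I) + f ((x : ℍ[ℝ]) + (-y) • I)) * (I * (g ((x : ℍ[ℝ]) + (-y) • I) - g ((x : ℍ[ℝ]) + y • I)))), hI2, neg_one_mul, sub_neg_eq_add]
    calc 4 * fg ((x : ℍ[ℝ]) + y • L) = 2 * (2 * fg ((x : ℍ[ℝ]) + y • L)) := by noncomm_ring
      _ = 2 * ((fg ((x : ℍ[ℝ]) + y • I) + fg ((x : ℍ[ℝ]) + (-y) • I)) + L * (I * (fg ((x : ℍ[ℝ]) + (-y) • I) - fg ((x : ℍ[ℝ]) + y • I)))) := by rw [rfg]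
      _ = 2 * (fg ((x : ℍ[ℝ]) + y • I) + fg ((x : ℍ[ℝ]) + (-y) • I)) + L * (I * (2 * (fg ((x : ℍ[ℝ]) + (-y) • I) - fg ((x : ℍ[ℝ]) + y • I)))) := by noncomm_ring
      _ = ((f ((x : ℍ[ℝ]) + y • I) + f ((x : ℍ[ℝ]) + (-y) • I)) * (g ((x : ℍ[ℝ]) + y • I) + g ((x : ℍ[ℝ]) + (-y) • I)) - I * ((f ((x : ℍ[ℝ]) + (-y) • I) - f ((x : ℍ[ℝ]) + y • I)) * (I * (g ((x : ℍ[ℝ]) + (-y) • I) - g ((x : ℍ[ℝ]) + y • I)))))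
            + L * (I * ((f ((x : ℍ[ℝ]) + (-y) • I) - f ((x : ℍ[ℝ]) + y • I)) * (g ((x : ℍ[ℝ]) + y • I) + g ((x : ℍ[ℝ]) + (-y) • I)) - I * ((f ((x : ℍ[ℝ]) + y • I) + f ((x : ℍ[ℝ]) + (-y) • I)) * (I * (g ((x : ℍ[ℝ]) + (-y) • I) - g ((x : ℍ[ℝ]) + y • I)))))) := by rw [id1, id2]
      _ = _ := by rw [e]; noncomm_ring
  by_cases hA : f ((x : ℍ[ℝ]) + y • L) = 0
  · -- zero case
    have habs : (f ((x : ℍ[ℝ]) + y • I) + f ((x : ℍ[ℝ]) + (-y) • I)) + L * (I * (f ((x : ℍ[ℝ]) + (-y) • I) - f ((x : ℍ[ℝ]) + y • I))) = 0 := by rw [← rf, hA, mul_zero]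
    have hS : (f ((x : ℍ[ℝ]) + y • I) + f ((x : ℍ[ℝ]) + (-y) • I)) = -(L * (I * (f ((x : ℍ[ℝ]) + (-y) • I) - f ((x : ℍ[ℝ]) + y • I)))) := eq_neg_of_add_eq_zero_left habs
    have hz4 : 4 * fg ((x : ℍ[ℝ]) + y • L) = 0 := by
      rw [key4, hS]
      have t1 : (-(L * (I * (f ((x : ℍ[ℝ]) + (-y) • I) - f ((x : ℍ[ℝ]) + y • I))))) * (g ((x : ℍ[ℝ]) + y • I) + g ((x : ℍ[ℝ]) + (-y) • I)) = -(L * (I * ((f ((x : ℍ[ℝ]) + (-y) • I) - f ((x : ℍ[ℝ]) + y • I)) * (g ((x : ℍ[ℝ]) + y • I) + g ((x : ℍ[ℝ]) + (-y) • I))))) := by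
        noncomm_ring
      have t2 : L * ((-(L * (I * (f ((x : ℍ[ℝ]) + (-y) • I) - f ((x : ℍ[ℝ]) + y • I))))) * (I * (g ((x : ℍ[ℝ]) + (-y) • I) - g ((x : ℍ[ℝ]) + y • I)))) = I * ((f ((x : ℍ[ℝ]) + (-y) • I) - f ((x : ℍ[ℝ]) + y • I)) * (I * (g ((x : ℍ[ℝ]) + (-y) • I) - g ((x : ℍ[ℝ]) + y • I)))) := by
        have u : L * ((-(L * (I * (f ((x : ℍ[ℝ]) + (-y) • I) - f ((x : ℍ[ℝ]) + y • I))))) * (I * (g ((x : ℍ[ℝ]) + (-y) • I) - g ((x : ℍ[ℝ]) + y • I))))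
            = -((L * L) * (I * ((f ((x : ℍ[ℝ]) + (-y) • I) - f ((x : ℍ[ℝ]) + y • I)) * (I * (g ((x : ℍ[ℝ]) + (-y) • I) - g ((x : ℍ[ℝ]) + y • I)))))) := by noncomm_ring
        rw [u, hL2, neg_one_mul, neg_neg]
      rw [t1, t2]
      abel
    have hfg0 : fg ((x : ℍ[ℝ]) + y • L) = 0 := by
      rcases mul_eq_zero.1 hz4 with h4 | h4
      · exact absurd h4 (quat_num_ne 4)
      · exact h4
    constructor
    · intro _
      exact Or.inl hA
    · intro _
      exact hfg0
  · -- nonzero case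
    have hL' : ((f ((x : ℍ[ℝ]) + y • L))⁻¹ * L * f ((x : ℍ[ℝ]) + y • L)) ∈ SpH := spH_conj hL hA
    have hq' : (f ((x : ℍ[ℝ]) + y • L))⁻¹ * ((x : ℍ[ℝ]) + y • L) * (f ((x : ℍ[ℝ]) + y • L)) = ((x : ℍ[ℝ]) + y • ((f ((x : ℍ[ℝ]) + y • L))⁻¹ * L * f ((x : ℍ[ℝ]) + y • L))) :=
      conj_slice (A := f ((x : ℍ[ℝ]) + y • L)) (L := L) hA x y
    have hq'mem : ((x : ℍ[ℝ]) + y • ((f ((x : ℍ[ℝ]) + y • L))⁻¹ * L * f ((x : ℍ[ℝ]) + y • L))) ∈ Ω := axs_mem hax hL hL' hq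
    have rg := rep_formula hop hx₀ hax hsl hg hI hL' x y hq'mem
    have hALA : f ((x : ℍ[ℝ]) + y • L) * (((f ((x : ℍ[ℝ]) + y • L))⁻¹ * L * f ((x : ℍ[ℝ]) + y • L)) * (I * (g ((x : ℍ[ℝ]) + (-y) • I) - g ((x : ℍ[ℝ]) + y • I)))) = L * (f ((x : ℍ[ℝ]) + y • L) * (I * (g ((x : ℍ[ℝ]) + (-y) • I) - g ((x : ℍ[ℝ]) + y • I)))) := by
      have u : f ((x : ℍ[ℝ]) + y • L) * (((f ((x : ℍ[ℝ]) + y • L))⁻¹ * L * f ((x : ℍ[ℝ]) + y • L)) * (I * (g ((x : ℍ[ℝ]) + (-y) • I) - g ((x : ℍ[ℝ]) + y • I))))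
          = (f ((x : ℍ[ℝ]) + y • L) * ((f ((x : ℍ[ℝ]) + y • L))⁻¹ * L * f ((x : ℍ[ℝ]) + y • L))) * (I * (g ((x : ℍ[ℝ]) + (-y) • I) - g ((x : ℍ[ℝ]) + y • I))) := by noncomm_ring
      have v : f ((x : ℍ[ℝ]) + y • L) * ((f ((x : ℍ[ℝ]) + y • L))⁻¹ * L * f ((x : ℍ[ℝ]) + y • L)) = L * f ((x : ℍ[ℝ]) + y • L) := by
        rw [← mul_assoc, ← mul_assoc, mul_inv_cancel₀ hA, one_mul]
      rw [u, v, mul_assoc]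
    have claim : 4 * fg ((x : ℍ[ℝ]) + y • L) = (2 * f ((x : ℍ[ℝ]) + y • L)) * (2 * g ((x : ℍ[ℝ]) + y • ((f ((x : ℍ[ℝ]) + y • L))⁻¹ * L * f ((x : ℍ[ℝ]) + y • L)))) := by
      have expand : (2 * f ((x : ℍ[ℝ]) + y • L)) * (2 * g ((x : ℍ[ℝ]) + y • ((f ((x : ℍ[ℝ]) + y • L))⁻¹ * L * f ((x : ℍ[ℝ]) + y • L))))
          = (2 * f ((x : ℍ[ℝ]) + y • L)) * (g ((x : ℍ[ℝ]) + y • I) + g ((x : ℍ[ℝ]) + (-y) • I)) + L * ((2 * f ((x : ℍ[ℝ]) + y • L)) * (I * (g ((x : ℍ[ℝ]) + (-y) • I) - g ((x : ℍ[ℝ]) + y • I)))) := by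
        rw [rg, mul_add]
        congr 1
        calc (2 * f ((x : ℍ[ℝ]) + y • L)) * (((f ((x : ℍ[ℝ]) + y • L))⁻¹ * L * f ((x : ℍ[ℝ]) + y • L)) * (I * (g ((x : ℍ[ℝ]) + (-y) • I) - g ((x : ℍ[ℝ]) + y • I))))
            = 2 * (f ((x : ℍ[ℝ]) + y • L) * (((f ((x : ℍ[ℝ]) + y • L))⁻¹ * L * f ((x : ℍ[ℝ]) + y • L)) * (I * (g ((x : ℍ[ℝ]) + (-y) • I) - g ((x : ℍ[ℝ]) + y • I))))) := by noncomm_ring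
          _ = 2 * (L * (f ((x : ℍ[ℝ]) + y • L) * (I * (g ((x : ℍ[ℝ]) + (-y) • I) - g ((x : ℍ[ℝ]) + y • I))))) := by rw [hALA]
          _ = L * ((2 * f ((x : ℍ[ℝ]) + y • L)) * (I * (g ((x : ℍ[ℝ]) + (-y) • I) - g ((x : ℍ[ℝ]) + y • I)))) := by noncomm_ring
      rw [key4, expand, rf]
      have u1 : ((f ((x : ℍ[ℝ]) + y • I) + f ((x : ℍ[ℝ]) + (-y) • I)) + L * (I * (f ((x : ℍ[ℝ]) + (-y) • I) - f ((x : ℍ[ℝ]) + y • I)))) * (g ((x : ℍ[ℝ]) + y • I) + g ((x : ℍ[ℝ]) + (-y) • I))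
          = (f ((x : ℍ[ℝ]) + y • I) + f ((x : ℍ[ℝ]) + (-y) • I)) * (g ((x : ℍ[ℝ]) + y • I) + g ((x : ℍ[ℝ]) + (-y) • I)) + L * (I * ((f ((x : ℍ[ℝ]) + (-y) • I) - f ((x : ℍ[ℝ]) + y • I)) * (g ((x : ℍ[ℝ]) + y • I) + g ((x : ℍ[ℝ]) + (-y) • I)))) := by noncomm_ring
      have u2 : L * (((f ((x : ℍ[ℝ]) + y • I) + f ((x : ℍ[ℝ]) + (-y) • I)) + L * (I * (f ((x : ℍ[ℝ]) + (-y) • I) - f ((x : ℍ[ℝ]) + y • I)))) * (I * (g ((x : ℍ[ℝ]) + (-y) • I) - g ((x : ℍ[ℝ]) + y • I))))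
          = L * ((f ((x : ℍ[ℝ]) + y • I) + f ((x : ℍ[ℝ]) + (-y) • I)) * (I * (g ((x : ℍ[ℝ]) + (-y) • I) - g ((x : ℍ[ℝ]) + y • I)))) + (L * L) * (I * ((f ((x : ℍ[ℝ]) + (-y) • I) - f ((x : ℍ[ℝ]) + y • I)) * (I * (g ((x : ℍ[ℝ]) + (-y) • I) - g ((x : ℍ[ℝ]) + y • I))))) := by noncomm_ring
      rw [u1, u2, hL2, neg_one_mul]
      abel
    have h2' : (2 : ℍ[ℝ]) ≠ 0 := quat_num_ne 2
    have h2A : (2 : ℍ[ℝ]) * f ((x : ℍ[ℝ]) + y • L) ≠ 0 := mul_ne_zero h2' hA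
    have hfgiff : fg ((x : ℍ[ℝ]) + y • L) = 0 ↔ g ((x : ℍ[ℝ]) + y • ((f ((x : ℍ[ℝ]) + y • L))⁻¹ * L * f ((x : ℍ[ℝ]) + y • L))) = 0 := by
      constructor
      · intro h0
        have hz : (2 * f ((x : ℍ[ℝ]) + y • L)) * (2 * g ((x : ℍ[ℝ]) + y • ((f ((x : ℍ[ℝ]) + y • L))⁻¹ * L * f ((x : ℍ[ℝ]) + y • L)))) = 0 := by
          rw [← claim, h0, mul_zero]
        rcases mul_eq_zero.1 hz with h | h
        · exact absurd h h2A
        · rcases mul_eq_zero.1 h with h' | h'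
          · exact absurd h' h2'
          · exact h'
      · intro h0
        have hz : 4 * fg ((x : ℍ[ℝ]) + y • L) = 0 := by
          rw [claim, h0, mul_zero, mul_zero]
        rcases mul_eq_zero.1 hz with h | h
        · exact absurd h (quat_num_ne 4)
        · exact h
    constructor
    · intro h0
      right
      refine ⟨hA, ?_⟩
      rw [hq']
      exact hfgiff.1 h0
    · rintro (h0 | ⟨-, h0⟩)
      · exact absurd h0 hA
      · rw [hq'] at h0
        exact hfgiff.2 h0
end
end

section
/- Fix s ∈ ℍ. The function g : ℍ ∖ Z → ℍ defined by g(q) = (q² − 2·Re(s)·q + |s|²)⁻¹·(q − conj(s)), where Z = {q ∈ ℍ : q² − 2·Re(s)·q + |s|² = 0}, is slice regular on ℍ ∖ Z (note q² − 2·Re(s)·q + |s|² is real-valued in the appropriate sense: it has real coefficients, so it commutes with the second factor on each slice). -/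
open Quaternion

noncomputable section

/-AUX-/
private lemma sph_mul_self {I : ℍ[ℝ]} (h1 : I.re = 0) (h2 : ‖I‖ = 1) : I * I = -1 := by
  have hs : star I = -I := by ext <;> simp [h1]
  have hn : (Quaternion.normSq I : ℝ) = 1 := by
    rw [Quaternion.normSq_eq_norm_mul_self, h2, one_mul]
  have := Quaternion.self_mul_star (a := I)
  rw [hs, hn] at this
  simpa [mul_neg] using congrArg Neg.neg this


/-- The Cauchy kernel `(q² - 2 Re(s) q + |s|²)⁻¹ (q - conj s)`, the regular reciprocal of
`q ↦ q - s`, is slice regular away from the zeros of `q² - 2 Re(s) q + |s|²`. -/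
theorem cauchy_kernel_slice_regular (s : ℍ[ℝ]) :
    SliceRegularOn
      (fun q : ℍ[ℝ] =>
        (q ^ 2 - 2 * (s.re : ℍ[ℝ]) * q + ((Quaternion.normSq s : ℝ) : ℍ[ℝ]))⁻¹ *
          (q - star s))
      {q : ℍ[ℝ] | q ^ 2 - 2 * (s.re : ℍ[ℝ]) * q + ((Quaternion.normSq s : ℝ) : ℍ[ℝ]) ≠ 0} := by
  rintro I ⟨h1, h2⟩
  have hI2 : I * I = -1 := sph_mul_self h1 h2
  set φ : ℂ →ₐ[ℝ] ℍ[ℝ] := Complex.liftAux I hI2 with hφdef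
  have hφz : ∀ z : ℂ, φ z = ((z.re : ℝ) : ℍ[ℝ]) + z.im • I := by
    intro z
    rw [hφdef, Complex.liftAux_apply]
    norm_num [Quaternion.algebraMap_def]
  have hφxy : ∀ x y : ℝ, φ (x + y * Complex.I) = (x : ℍ[ℝ]) + y • I := by
    intro x y; rw [hφz]; simp
  have hφr : ∀ x : ℝ, φ ((x : ℝ) : ℂ) = (x : ℍ[ℝ]) := by
    intro x; rw [hφz]; simp
  have hφI : φ Complex.I = I := Complex.liftAux_apply_I I hI2
  have hinj : Function.Injective φ := φ.toRingHom.injective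
  set a : ℂ := ((s.re : ℝ) : ℂ) with ha
  set n : ℂ := ((Quaternion.normSq s : ℝ) : ℂ) with hn
  set P : ℂ → ℂ := fun z => z ^ 2 - 2 * a * z + n with hP
  have hφP : ∀ z : ℂ,
      (φ z) ^ 2 - 2 * (s.re : ℍ[ℝ]) * (φ z) + ((Quaternion.normSq s : ℝ) : ℍ[ℝ])
        = φ (P z) := by
    intro z
    rw [hP]
    rw [map_add, map_sub, map_pow, map_mul, map_mul, map_ofNat, ha, hn, hφr, hφr]
  set G' : ℂ → ℂ := fun z => -(2 * z - 2 * a) / P z ^ 2 with hG'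
  set K' : ℂ → ℂ := fun z => G' z * z + (P z)⁻¹ with hK'
  set F : ℂ → ℍ[ℝ] := fun z => φ ((P z)⁻¹ * z) - φ ((P z)⁻¹) * star s with hF
  have hfF : ∀ z : ℂ,
      ((φ z) ^ 2 - 2 * (s.re : ℍ[ℝ]) * (φ z) + ((Quaternion.normSq s : ℝ) : ℍ[ℝ]))⁻¹
        * (φ z - star s) = F z := by
    intro z
    rw [hφP, ← map_inv₀, mul_sub, ← map_mul]
  -- membership characterization
  have hmemP : ∀ x y : ℝ,
      ((x : ℍ[ℝ]) + y • I ∈ {q : ℍ[ℝ] |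
        q ^ 2 - 2 * (s.re : ℍ[ℝ]) * q + ((Quaternion.normSq s : ℝ) : ℍ[ℝ]) ≠ 0})
        ↔ P ((x : ℂ) + y * Complex.I) ≠ 0 := by
    intro x y
    rw [Set.mem_setOf_eq, ← hφxy x y, hφP]
    constructor
    · intro h hc; exact h (by rw [hc, map_zero])
    · intro h hc; exact h (hinj (by rwa [map_zero]))
  -- complex derivatives
  have hPD : ∀ z : ℂ, HasDerivAt P (2 * z - 2 * a) z := by
    intro z
    have h := (((hasDerivAt_pow 2 z).sub ((hasDerivAt_id z).const_mul (2 * a))).add_const n)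
    rw [hP]; simpa using h
  have hGD : ∀ z : ℂ, P z ≠ 0 → HasDerivAt (fun w => (P w)⁻¹) (G' z) z := by
    intro z hz
    exact (hPD z).inv hz
  have hKD : ∀ z : ℂ, P z ≠ 0 → HasDerivAt (fun w => (P w)⁻¹ * w) (K' z) z := by
    intro z hz
    exact ((hGD z hz).mul (hasDerivAt_id z)).congr_deriv (by simp [hK'])
  -- φ as continuous linear map
  set φL : ℂ →L[ℝ] ℍ[ℝ] := LinearMap.toContinuousLinearMap φ.toLinearMap with hφL
  have hφLapp : ∀ z : ℂ, φL z = φ z := fun z => rfl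
  have hφD : ∀ {g : ℝ → ℂ} {d : ℂ} {x : ℝ}, HasDerivAt g d x →
      HasDerivAt (fun t => φ (g t)) (φ d) x := by
    intro g d x hg
    exact φL.hasFDerivAt.comp_hasDerivAt x hg
  refine ⟨fun x y => φ (K' (x + y * Complex.I)) - φ (G' (x + y * Complex.I)) * star s,
      fun x y => I * (φ (K' (x + y * Complex.I)) - φ (G' (x + y * Complex.I)) * star s),
      ?_, ?_, ?_, ?_, ?_⟩
  · -- x-derivative
    intro x y hmem
    beta_reduce
    have hPz : P ((x : ℂ) + y * Complex.I) ≠ 0 := (hmemP x y).mp hmem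
    set z : ℂ := (x : ℂ) + y * Complex.I with hz
    have hline : HasDerivAt (fun w : ℂ => w + (y : ℂ) * Complex.I) 1 (x : ℂ) :=
      (hasDerivAt_id _).add_const _
    have hK1 : HasDerivAt (fun t : ℝ => (P ((t : ℂ) + y * Complex.I))⁻¹
        * ((t : ℂ) + y * Complex.I)) (K' z) x := by
      have := ((hKD z hPz).comp (x : ℂ) hline).comp_ofReal
      simpa using this
    have hG1 : HasDerivAt (fun t : ℝ => (P ((t : ℂ) + y * Complex.I))⁻¹) (G' z) x := by
      have := ((hGD z hPz).comp (x : ℂ) hline).comp_ofReal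
      simpa using this
    have key : HasDerivAt (fun t : ℝ => F ((t : ℂ) + y * Complex.I))
        (φ (K' z) - φ (G' z) * star s) x := by
      rw [hF]
      exact (hφD hK1).sub ((hφD hG1).mul_const (star s))
    exact key.congr_of_eventuallyEq (Filter.Eventually.of_forall fun t => by
      beta_reduce
      rw [← hφxy t y, hfF])
  · -- y-derivative
    intro x y hmem
    beta_reduce
    have hPz : P ((x : ℂ) + y * Complex.I) ≠ 0 := (hmemP x y).mp hmem
    set z : ℂ := (x : ℂ) + y * Complex.I with hz
    have hline : HasDerivAt (fun w : ℂ => (x : ℂ) + w * Complex.I) Complex.I (y : ℂ) :=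
      (hasDerivAt_mul_const Complex.I).const_add _
    have hK1 : HasDerivAt (fun t : ℝ => (P ((x : ℂ) + t * Complex.I))⁻¹
        * ((x : ℂ) + t * Complex.I)) (K' z * Complex.I) y := by
      have := ((hKD z hPz).comp (y : ℂ) hline).comp_ofReal
      simpa using this
    have hG1 : HasDerivAt (fun t : ℝ => (P ((x : ℂ) + t * Complex.I))⁻¹)
        (G' z * Complex.I) y := by
      have := ((hGD z hPz).comp (y : ℂ) hline).comp_ofReal
      simpa using this
    have key : HasDerivAt (fun t : ℝ => F ((x : ℂ) + t * Complex.I))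
        (φ (K' z * Complex.I) - φ (G' z * Complex.I) * star s) y := by
      rw [hF]
      exact (hφD hK1).sub ((hφD hG1).mul_const (star s))
    have heq : φ (K' z * Complex.I) - φ (G' z * Complex.I) * star s
        = I * (φ (K' z) - φ (G' z) * star s) := by
      rw [mul_comm (K' z), mul_comm (G' z), map_mul, map_mul, hφI, mul_sub, mul_assoc]
    rw [← heq]
    exact key.congr_of_eventuallyEq (Filter.Eventually.of_forall fun t => by
      beta_reduce
      rw [← hφxy x t, hfF])
  · -- continuity of fx
    have hzc : Continuous (fun p : ℝ × ℝ => ((p.1 : ℂ) + p.2 * Complex.I)) := by fun_prop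
    have hPc : Continuous (fun p : ℝ × ℝ => P ((p.1 : ℂ) + p.2 * Complex.I)) := by
      rw [hP]; fun_prop
    have hS : ∀ p : ℝ × ℝ, ((p.1 : ℍ[ℝ]) + p.2 • I ∈ {q : ℍ[ℝ] |
        q ^ 2 - 2 * (s.re : ℍ[ℝ]) * q + ((Quaternion.normSq s : ℝ) : ℍ[ℝ]) ≠ 0}) →
        P ((p.1 : ℂ) + p.2 * Complex.I) ≠ 0 := fun p hp => (hmemP p.1 p.2).mp hp
    have hGc : ContinuousOn (fun p : ℝ × ℝ => G' ((p.1 : ℂ) + p.2 * Complex.I))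
        {p : ℝ × ℝ | (p.1 : ℍ[ℝ]) + p.2 • I ∈ {q : ℍ[ℝ] | q ^ 2 - 2 * (s.re : ℍ[ℝ]) * q + ((Quaternion.normSq s : ℝ) : ℍ[ℝ]) ≠ 0}} := by
      rw [hG']
      exact ContinuousOn.div (by fun_prop) (hPc.pow 2).continuousOn
        (fun p hp => pow_ne_zero _ (hS p hp))
    have hKc : ContinuousOn (fun p : ℝ × ℝ => K' ((p.1 : ℂ) + p.2 * Complex.I))
        {p : ℝ × ℝ | (p.1 : ℍ[ℝ]) + p.2 • I ∈ {q : ℍ[ℝ] | q ^ 2 - 2 * (s.re : ℍ[ℝ]) * q + ((Quaternion.normSq s : ℝ) : ℍ[ℝ]) ≠ 0}} := by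
      rw [hK']
      exact (hGc.mul hzc.continuousOn).add (hPc.continuousOn.inv₀ hS)
    exact (φL.continuous.comp_continuousOn hKc).sub
      ((φL.continuous.comp_continuousOn hGc).mul continuousOn_const)
  · -- continuity of fy
    have hzc : Continuous (fun p : ℝ × ℝ => ((p.1 : ℂ) + p.2 * Complex.I)) := by fun_prop
    have hPc : Continuous (fun p : ℝ × ℝ => P ((p.1 : ℂ) + p.2 * Complex.I)) := by
      rw [hP]; fun_prop
    have hS : ∀ p : ℝ × ℝ, ((p.1 : ℍ[ℝ]) + p.2 • I ∈ {q : ℍ[ℝ] |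
        q ^ 2 - 2 * (s.re : ℍ[ℝ]) * q + ((Quaternion.normSq s : ℝ) : ℍ[ℝ]) ≠ 0}) →
        P ((p.1 : ℂ) + p.2 * Complex.I) ≠ 0 := fun p hp => (hmemP p.1 p.2).mp hp
    have hGc : ContinuousOn (fun p : ℝ × ℝ => G' ((p.1 : ℂ) + p.2 * Complex.I))
        {p : ℝ × ℝ | (p.1 : ℍ[ℝ]) + p.2 • I ∈ {q : ℍ[ℝ] | q ^ 2 - 2 * (s.re : ℍ[ℝ]) * q + ((Quaternion.normSq s : ℝ) : ℍ[ℝ]) ≠ 0}} := by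
      rw [hG']
      exact ContinuousOn.div (by fun_prop) (hPc.pow 2).continuousOn
        (fun p hp => pow_ne_zero _ (hS p hp))
    have hKc : ContinuousOn (fun p : ℝ × ℝ => K' ((p.1 : ℂ) + p.2 * Complex.I))
        {p : ℝ × ℝ | (p.1 : ℍ[ℝ]) + p.2 • I ∈ {q : ℍ[ℝ] | q ^ 2 - 2 * (s.re : ℍ[ℝ]) * q + ((Quaternion.normSq s : ℝ) : ℍ[ℝ]) ≠ 0}} := by
      rw [hK']
      exact (hGc.mul hzc.continuousOn).add (hPc.continuousOn.inv₀ hS)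
    exact continuousOn_const.mul ((φL.continuous.comp_continuousOn hKc).sub
      ((φL.continuous.comp_continuousOn hGc).mul continuousOn_const))
  · -- Cauchy-Riemann
    intro x y _
    rw [← mul_assoc, hI2, neg_one_mul, add_neg_cancel]
end
end
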